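/- For every n ≥ 1, the map ρ ↦ (h_1,…,h_n), where h_i = #{k : i < k ≤ n, ρ_k < ρ_i}, is a bijection from the set of (3,1,2)-avoiding permutations of {1,…,n} onto the set H_n of sequences (h_1,…,h_n) of nonnegative integers with h_n = 0 and h_i ≤ h_{i+1} + 1 for all 1 ≤ i ≤ n−1. -/

import Mathlib

/-- The 312-height of entry `i` of `ρ`: the number of entries to the right of `i`
that are smaller than `ρ i`. -/
def height312 {n : ℕ} (ρ : Equiv.Perm (Fin n)) (i : Fin n) : ℕ :=
  (Finset.univ.filter (fun k => i < k ∧ ρ k < ρ i)).card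

open Finset

-- rank lemma for orderEmbOfFin
lemma rank_orderEmbOfFin {n : ℕ} (s : Finset (Fin n)) {k : ℕ} (h : s.card = k) (j : Fin k) :
    (s.filter (· < s.orderEmbOfFin h j)).card = j := by
  have : s.filter (· < s.orderEmbOfFin h j) = (Finset.Iio j).image (s.orderEmbOfFin h) := by
    ext w
    simp only [mem_filter, mem_image, mem_Iio]
    constructor
    · rintro ⟨hw, hlt⟩
      obtain ⟨x, hx⟩ : ∃ x, s.orderEmbOfFin h x = w := by
        have := Finset.range_orderEmbOfFin s h
        have : w ∈ Set.range (s.orderEmbOfFin h) := by rw [this]; exact hw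
        exact this
      refine ⟨x, ?_, hx⟩
      rw [← hx] at hlt
      exact (s.orderEmbOfFin h).lt_iff_lt.mp hlt
    · rintro ⟨x, hx, rfl⟩
      exact ⟨Finset.orderEmbOfFin_mem s h x, (s.orderEmbOfFin h).lt_iff_lt.mpr hx⟩
  rw [this, Finset.card_image_of_injective _ (s.orderEmbOfFin h).injective, Fin.card_Iio]

/-- pick the element of `s` of rank `k` (k-th smallest, 0-based); junk if `k ≥ s.card`. -/
noncomputable def pick {n : ℕ} (hn : 0 < n) (s : Finset (Fin n)) (k : ℕ) : Fin n :=
  if hk : k < s.card then s.orderEmbOfFin rfl ⟨k, hk⟩ else ⟨0, hn⟩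

lemma pick_mem {n : ℕ} (hn : 0 < n) {s : Finset (Fin n)} {k : ℕ} (hk : k < s.card) :
    pick hn s k ∈ s := by
  simp only [pick, dif_pos hk]; exact Finset.orderEmbOfFin_mem s rfl _

lemma pick_rank {n : ℕ} (hn : 0 < n) {s : Finset (Fin n)} {k : ℕ} (hk : k < s.card) :
    (s.filter (· < pick hn s k)).card = k := by
  simp only [pick, dif_pos hk]; exact rank_orderEmbOfFin s rfl ⟨k, hk⟩

noncomputable def dec {n : ℕ} (hn : 0 < n) (h : Fin n → ℕ) : ℕ → Fin n
  | i =>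
    pick hn (Finset.univ \ (Finset.range i).attach.image (fun j => dec hn h j.1))
      (if hi : i < n then h ⟨i, hi⟩ else 0)
decreasing_by exact Finset.mem_range.mp j.2

/-- remaining values before step `i` -/
noncomputable def rem {n : ℕ} (hn : 0 < n) (h : Fin n → ℕ) (i : ℕ) : Finset (Fin n) :=
  Finset.univ \ (Finset.range i).attach.image (fun j => dec hn h j.1)

lemma dec_eq {n : ℕ} (hn : 0 < n) (h : Fin n → ℕ) (i : ℕ) (hi : i < n) :
    dec hn h i = pick hn (rem hn h i) (h ⟨i, hi⟩) := by
  rw [dec, rem, dif_pos hi]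

lemma mem_rem_iff {n : ℕ} (hn : 0 < n) (h : Fin n → ℕ) (i : ℕ) (w : Fin n) :
    w ∈ rem hn h i ↔ ∀ j, j < i → dec hn h j ≠ w := by
  simp only [rem, Finset.mem_sdiff, Finset.mem_univ, true_and, Finset.mem_image,
    Finset.mem_attach, true_and, not_exists, Subtype.forall, Finset.mem_range]

lemma rem_succ {n : ℕ} (hn : 0 < n) (h : Fin n → ℕ) (i : ℕ) :
    rem hn h (i + 1) = (rem hn h i).erase (dec hn h i) := by
  ext w
  simp only [mem_rem_iff, Finset.mem_erase]
  constructor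
  · intro H
    exact ⟨fun e => H i (Nat.lt_succ_self i) e.symm, fun j hj => H j (by omega)⟩
  · rintro ⟨hne, H⟩ j hj
    rcases Nat.lt_succ_iff_lt_or_eq.mp hj with hj | rfl
    · exact H j hj
    · exact fun e => hne e.symm

lemma card_rem {n : ℕ} (hn : 0 < n) (h : Fin n → ℕ)
    (B : ∀ i (hi : i < n), h ⟨i, hi⟩ + i + 1 ≤ n) :
    ∀ i, i ≤ n → (rem hn h i).card = n - i := by
  intro i
  induction i with
  | zero => intro _; simp [rem]
  | succ i ih =>
    intro hi
    have hci : (rem hn h i).card = n - i := ih (by omega)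
    have hii : i < n := by omega
    have hmem : dec hn h i ∈ rem hn h i := by
      rw [dec_eq hn h i hii]
      exact pick_mem hn (by rw [hci]; have := B i hii; omega)
    rw [rem_succ, Finset.card_erase_of_mem hmem, hci]
    omega

lemma dec_mem_rem {n : ℕ} (hn : 0 < n) (h : Fin n → ℕ)
    (B : ∀ i (hi : i < n), h ⟨i, hi⟩ + i + 1 ≤ n) {i : ℕ} (hi : i < n) :
    dec hn h i ∈ rem hn h i := by
  rw [dec_eq hn h i hi]
  exact pick_mem hn (by rw [card_rem hn h B i (by omega)]; have := B i hi; omega)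

lemma rem_antitone {n : ℕ} (hn : 0 < n) (h : Fin n → ℕ) {i j : ℕ} (hij : i ≤ j) :
    rem hn h j ⊆ rem hn h i := by
  intro w
  simp only [mem_rem_iff]
  intro H k hk
  exact H k (by omega)

lemma dec_injOn {n : ℕ} (hn : 0 < n) (h : Fin n → ℕ)
    (B : ∀ i (hi : i < n), h ⟨i, hi⟩ + i + 1 ≤ n) {i j : ℕ} (hi : i < n) (hj : j < n)
    (hij : i ≠ j) : dec hn h i ≠ dec hn h j := by
  wlog hlt : i < j generalizing i j
  · exact (this hj hi hij.symm (by omega)).symm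
  have h1 : dec hn h j ∈ rem hn h j := dec_mem_rem hn h B hj
  have h2 : dec hn h j ∈ rem hn h (i+1) := rem_antitone hn h (by omega) h1
  rw [mem_rem_iff] at h2
  exact h2 i (Nat.lt_succ_self i)

noncomputable def decPerm {n : ℕ} (hn : 0 < n) (h : Fin n → ℕ)
    (B : ∀ i (hi : i < n), h ⟨i, hi⟩ + i + 1 ≤ n) : Equiv.Perm (Fin n) :=
  Equiv.ofBijective (fun i : Fin n => dec hn h i.1)
    (Finite.injective_iff_bijective.mp (by
      intro a b hab
      by_contra hne
      exact dec_injOn hn h B a.2 b.2 (fun e => hne (Fin.ext e)) hab))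

lemma decPerm_apply {n : ℕ} (hn : 0 < n) (h : Fin n → ℕ)
    (B : ∀ i (hi : i < n), h ⟨i, hi⟩ + i + 1 ≤ n) (i : Fin n) :
    decPerm hn h B i = dec hn h i.1 := rfl

lemma mem_rem_succ_iff {n : ℕ} (hn : 0 < n) (h : Fin n → ℕ)
    (B : ∀ i (hi : i < n), h ⟨i, hi⟩ + i + 1 ≤ n) (i : Fin n) (w : Fin n) :
    w ∈ rem hn h (i.1 + 1) ↔ ∃ k : Fin n, i < k ∧ decPerm hn h B k = w := by
  constructor
  · intro hw
    obtain ⟨k, rfl⟩ := (decPerm hn h B).surjective w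
    refine ⟨k, ?_, rfl⟩
    rw [decPerm_apply, mem_rem_iff] at hw
    by_contra hle
    exact hw k.1 (by push_neg at hle; exact Nat.lt_succ_of_le (Fin.le_iff_val_le_val.mp hle)) rfl
  · rintro ⟨k, hk, rfl⟩
    rw [decPerm_apply]
    exact rem_antitone hn h (by exact hk) (dec_mem_rem hn h B k.2)

lemma height_decPerm {n : ℕ} (hn : 0 < n) (h : Fin n → ℕ)
    (B : ∀ i (hi : i < n), h ⟨i, hi⟩ + i + 1 ≤ n) (i : Fin n) :
    height312 (decPerm hn h B) i = h i := by
  set ρ := decPerm hn h B with hρ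
  have key : (Finset.univ.filter (fun k => i < k ∧ ρ k < ρ i)).card
      = ((rem hn h (i.1 + 1)).filter (· < ρ i)).card := by
    apply Finset.card_bij (fun k _ => ρ k)
    · intro k hk
      simp only [Finset.mem_filter, Finset.mem_univ, true_and] at hk
      rw [Finset.mem_filter]
      exact ⟨(mem_rem_succ_iff hn h B i _).mpr ⟨k, hk.1, rfl⟩, hk.2⟩
    · intro a _ b _ hab
      exact ρ.injective hab
    · intro w hw
      rw [Finset.mem_filter] at hw
      obtain ⟨k, hk, rfl⟩ := (mem_rem_succ_iff hn h B i w).mp hw.1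
      exact ⟨k, by simp [hk]; exact hw.2, rfl⟩
  have h2 : ((rem hn h (i.1 + 1)).filter (· < ρ i)).card
      = ((rem hn h i.1).filter (· < ρ i)).card := by
    rw [rem_succ]
    congr 1
    ext w
    simp only [Finset.mem_filter, Finset.mem_erase]
    constructor
    · rintro ⟨⟨_, hw⟩, hlt⟩; exact ⟨hw, hlt⟩
    · rintro ⟨hw, hlt⟩
      refine ⟨⟨?_, hw⟩, hlt⟩
      rintro rfl
      rw [decPerm_apply] at hlt
      exact lt_irrefl _ hlt
  have hcard : h ⟨i.1, i.2⟩ < (rem hn h i.1).card := by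
    rw [card_rem hn h B i.1 (by omega)]
    have := B i.1 i.2
    omega
  have h3 : ((rem hn h i.1).filter (· < ρ i)).card = h i := by
    have : ρ i = pick hn (rem hn h i.1) (h ⟨i.1, i.2⟩) := by
      rw [hρ, decPerm_apply, dec_eq hn h i.1 i.2]
    rw [this, pick_rank hn hcard]
  rw [height312, key, h2, h3]

lemma avoid_of_heights {n : ℕ} (ρ : Equiv.Perm (Fin n))
    (H : ∀ i : ℕ, ∀ hi : i + 1 < n,
      height312 ρ ⟨i, Nat.lt_of_succ_lt hi⟩ ≤ height312 ρ ⟨i + 1, hi⟩ + 1) :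
    ∀ a b c : Fin n, a < b → b < c → ¬(ρ b < ρ c ∧ ρ c < ρ a) := by
  -- adjacent case first
  have adj : ∀ a b c : Fin n, a.1 + 1 = b.1 → b < c → ¬(ρ b < ρ c ∧ ρ c < ρ a) := by
    rintro a b c hadj hbc ⟨h1, h2⟩
    have hab : a < b := by rw [Fin.lt_def]; omega
    have hH := H a.1 (hadj ▸ b.2)
    have ea : (⟨a.1, by omega⟩ : Fin n) = a := rfl
    have eb : (⟨a.1 + 1, hadj ▸ b.2⟩ : Fin n) = b := Fin.ext hadj
    rw [ea, eb] at hH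
    -- build a large subset of the `a`-filter
    have hsub : insert b (insert c (Finset.univ.filter (fun k => b < k ∧ ρ k < ρ b)))
        ⊆ Finset.univ.filter (fun k => a < k ∧ ρ k < ρ a) := by
      intro k hk
      simp only [Finset.mem_insert, Finset.mem_filter, Finset.mem_univ, true_and] at hk ⊢
      rcases hk with rfl | rfl | ⟨hk1, hk2⟩
      · exact ⟨hab, lt_trans h1 h2⟩
      · exact ⟨lt_trans hab hbc, h2⟩
      · exact ⟨lt_trans hab hk1, lt_trans hk2 (lt_trans h1 h2)⟩
    have hcard : (insert b (insert c (Finset.univ.filter (fun k => b < k ∧ ρ k < ρ b)))).card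
        = height312 ρ b + 2 := by
      rw [Finset.card_insert_of_notMem, Finset.card_insert_of_notMem, height312]
      · simp only [Finset.mem_filter, Finset.mem_univ, true_and, not_and]
        intro _; exact fun hcc => absurd h1 (not_lt.mpr (le_of_lt hcc))
      · simp only [Finset.mem_insert, Finset.mem_filter, Finset.mem_univ, true_and, not_or,
          not_and]
        exact ⟨Fin.ne_of_lt hbc, fun hbb => absurd hbb (lt_irrefl b)⟩
    have := Finset.card_le_card hsub
    rw [hcard] at this
    have : height312 ρ b + 2 ≤ height312 ρ a := this
    omega
  suffices H2 : ∀ d : ℕ, ∀ a b c : Fin n, b.1 - a.1 ≤ d → a < b → b < c →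
      ¬(ρ b < ρ c ∧ ρ c < ρ a) by
    intro a b c hab hbc
    exact H2 (b.1 - a.1) a b c le_rfl hab hbc
  intro d
  induction d with
  | zero =>
    intro a b c hgap hab _ _
    rw [Fin.lt_def] at hab; omega
  | succ d ih =>
    rintro a b c hgap hab hbc ⟨h1, h2⟩
    by_cases hadj : a.1 + 1 = b.1
    · exact adj a b c hadj hbc ⟨h1, h2⟩
    · have hab' : a.1 < b.1 := hab
      have hb1 : b.1 - 1 < n := by omega
      set b' : Fin n := ⟨b.1 - 1, hb1⟩ with hb'
      have hab'' : a < b' := by rw [Fin.lt_def]; simp [hb']; omega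
      have hb'b : b' < b := by rw [Fin.lt_def]; simp [hb']; omega
      rcases lt_trichotomy (ρ b') (ρ c) with hlt | heq | hgt
      · exact ih a b' c (by simp [hb']; omega) hab'' (lt_trans hb'b hbc)
          ⟨hlt, h2⟩
      · exact absurd (ρ.injective heq) (Fin.ne_of_lt (lt_trans hb'b hbc))
      · exact adj b' b c (by simp [hb']; omega) hbc ⟨h1, hgt⟩

lemma heights_of_avoid {n : ℕ} (hn : 0 < n) (ρ : Equiv.Perm (Fin n))
    (hA : ∀ a b c : Fin n, a < b → b < c → ¬(ρ b < ρ c ∧ ρ c < ρ a)) :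
    height312 ρ ⟨n - 1, by omega⟩ = 0 ∧
      ∀ i : ℕ, ∀ hi : i + 1 < n,
        height312 ρ ⟨i, Nat.lt_of_succ_lt hi⟩ ≤ height312 ρ ⟨i + 1, hi⟩ + 1 := by
  constructor
  · rw [height312, Finset.card_eq_zero, Finset.filter_eq_empty_iff]
    intro k _
    simp only [not_and]
    intro hk
    exfalso
    rw [Fin.lt_def] at hk
    simp only at hk
    omega
  · intro i hi
    set a : Fin n := ⟨i, by omega⟩ with ha
    set b : Fin n := ⟨i + 1, hi⟩ with hb
    have hab : a < b := by rw [Fin.lt_def]; simp [ha, hb]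
    have hsub : Finset.univ.filter (fun k => a < k ∧ ρ k < ρ a)
        ⊆ insert b (Finset.univ.filter (fun k => b < k ∧ ρ k < ρ b)) := by
      intro k hk
      simp only [Finset.mem_filter, Finset.mem_univ, true_and, Finset.mem_insert] at hk ⊢
      obtain ⟨hk1, hk2⟩ := hk
      by_cases hkb : k = b
      · exact Or.inl hkb
      · right
        have hbk : b < k := by
          rw [Fin.lt_def] at hk1 ⊢
          have : k.1 ≠ i + 1 := fun e => hkb (Fin.ext e)
          simp only [ha] at hk1
          simp only [hb]
          omega
        refine ⟨hbk, ?_⟩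
        rcases lt_trichotomy (ρ a) (ρ b) with h1 | h2 | h3
        · exact lt_trans hk2 h1
        · exact absurd (ρ.injective h2) (Fin.ne_of_lt hab)
        · have := hA a b k hab hbk
          rcases lt_trichotomy (ρ k) (ρ b) with g1 | g2 | g3
          · exact g1
          · exact absurd (ρ.injective g2) hkb
          · exact absurd ⟨g3, hk2⟩ this
    calc height312 ρ a ≤ (insert b (Finset.univ.filter (fun k => b < k ∧ ρ k < ρ b))).card :=
          Finset.card_le_card hsub
      _ ≤ height312 ρ b + 1 := by
          rw [height312]
          exact Finset.card_insert_le _ _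

lemma card_filter_lt_univ {n : ℕ} (v : Fin n) :
    (Finset.univ.filter (fun w : Fin n => w < v)).card = v.1 := by
  have : Finset.univ.filter (fun w : Fin n => w < v) = Finset.Iio v := by
    ext w; simp
  rw [this, Fin.card_Iio]

lemma val_eq_height_add {n : ℕ} (ρ : Equiv.Perm (Fin n)) (i : Fin n) :
    (ρ i : ℕ) = height312 ρ i + (Finset.univ.filter (fun j => j < i ∧ ρ j < ρ i)).card := by
  have h1 : (Finset.univ.filter (fun k => ρ k < ρ i)).card = (ρ i : ℕ) := by
    rw [← card_filter_lt_univ (ρ i)]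
    apply Finset.card_bij (fun k _ => ρ k)
    · intro k hk
      simp only [Finset.mem_filter, Finset.mem_univ, true_and] at hk ⊢
      exact hk
    · intro a _ b _ hab; exact ρ.injective hab
    · intro w hw
      simp only [Finset.mem_filter, Finset.mem_univ, true_and] at hw
      exact ⟨ρ.symm w, by simp [hw], by simp⟩
  have hsplit : Finset.univ.filter (fun k => ρ k < ρ i)
      = Finset.univ.filter (fun k => i < k ∧ ρ k < ρ i)
        ∪ Finset.univ.filter (fun k => k < i ∧ ρ k < ρ i) := by
    ext k
    simp only [Finset.mem_filter, Finset.mem_union, Finset.mem_univ, true_and]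
    constructor
    · intro hk
      rcases lt_trichotomy i k with h | rfl | h
      · exact Or.inl ⟨h, hk⟩
      · exact absurd hk (lt_irrefl _)
      · exact Or.inr ⟨h, hk⟩
    · rintro (⟨_, hk⟩ | ⟨_, hk⟩) <;> exact hk
  rw [← h1, hsplit, Finset.card_union_of_disjoint]
  · rfl
  · rw [Finset.disjoint_left]
    intro k hk hk'
    simp only [Finset.mem_filter] at hk hk'
    exact absurd (lt_trans hk.2.1 hk'.2.1) (lt_irrefl _)

lemma count_split {n : ℕ} (ρ : Equiv.Perm (Fin n)) (i : Fin n) (v : Fin n) :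
    (v : ℕ) = (Finset.univ.filter (fun j => j < i ∧ ρ j < v)).card
      + (Finset.univ.filter (fun w => w < v ∧ ∀ j, j < i → ρ j ≠ w)).card := by
  have hsplit : Finset.univ.filter (fun w : Fin n => w < v)
      = Finset.univ.filter (fun w => w < v ∧ ∃ j, j < i ∧ ρ j = w)
        ∪ Finset.univ.filter (fun w => w < v ∧ ∀ j, j < i → ρ j ≠ w) := by
    ext w
    simp only [Finset.mem_filter, Finset.mem_union, Finset.mem_univ, true_and]
    constructor
    · intro hw
      by_cases he : ∃ j, j < i ∧ ρ j = w
      · exact Or.inl ⟨hw, he⟩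
      · push_neg at he
        exact Or.inr ⟨hw, he⟩
    · rintro (⟨hw, _⟩ | ⟨hw, _⟩) <;> exact hw
  have h1 : (Finset.univ.filter (fun w : Fin n => w < v ∧ ∃ j, j < i ∧ ρ j = w)).card
      = (Finset.univ.filter (fun j => j < i ∧ ρ j < v)).card := by
    symm
    apply Finset.card_bij (fun j _ => ρ j)
    · intro j hj
      simp only [Finset.mem_filter, Finset.mem_univ, true_and] at hj ⊢
      exact ⟨hj.2, j, hj.1, rfl⟩
    · intro a _ b _ hab; exact ρ.injective hab
    · intro w hw
      simp only [Finset.mem_filter, Finset.mem_univ, true_and] at hw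
      obtain ⟨hwv, j, hj, rfl⟩ := hw
      exact ⟨j, by simp [hj, hwv], rfl⟩
  rw [← card_filter_lt_univ v, hsplit, Finset.card_union_of_disjoint, h1]
  rw [Finset.disjoint_left]
  intro w hw hw'
  simp only [Finset.mem_filter, Finset.mem_univ, true_and] at hw hw'
  obtain ⟨_, j, hj, hje⟩ := hw
  exact hw'.2 j hj hje

lemma code_injective {n : ℕ} (ρ σ : Equiv.Perm (Fin n))
    (hE : ∀ i, height312 ρ i = height312 σ i) : ρ = σ := by
  suffices H : ∀ m : ℕ, ∀ i : Fin n, i.1 < m → ρ i = σ i by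
    exact Equiv.ext fun i => H n i i.2
  intro m
  induction m with
  | zero => intro i hi; omega
  | succ m ih =>
    intro i hi
    by_cases him : i.1 < m
    · exact ih i him
    have him' : i.1 = m := by omega
    have agree : ∀ j : Fin n, j < i → ρ j = σ j := by
      intro j hj
      exact ih j (by rw [Fin.lt_def, him'] at hj; exact hj)
    -- G is strictly monotone off the image of ρ on Iio i
    have Gmono : ∀ u v : Fin n, u < v → (∀ j, j < i → ρ j ≠ u) →
        (Finset.univ.filter (fun w => w < u ∧ ∀ j, j < i → ρ j ≠ w)).card
          < (Finset.univ.filter (fun w => w < v ∧ ∀ j, j < i → ρ j ≠ w)).card := by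
      intro u v huv hu
      apply Finset.card_lt_card
      have hsub : Finset.univ.filter (fun w => w < u ∧ ∀ j, j < i → ρ j ≠ w)
          ⊆ Finset.univ.filter (fun w => w < v ∧ ∀ j, j < i → ρ j ≠ w) := by
        intro w hw
        simp only [Finset.mem_filter, Finset.mem_univ, true_and] at hw ⊢
        exact ⟨lt_trans hw.1 huv, hw.2⟩
      rw [Finset.ssubset_iff_of_subset hsub]
      refine ⟨u, ?_, ?_⟩
      · simp only [Finset.mem_filter, Finset.mem_univ, true_and]
        exact ⟨huv, hu⟩
      · simp only [Finset.mem_filter, Finset.mem_univ, true_and, not_and]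
        exact fun hc => absurd hc (lt_irrefl u)
    have hρ := val_eq_height_add ρ i
    have hσ := val_eq_height_add σ i
    have hfσ : (Finset.univ.filter (fun j => j < i ∧ σ j < σ i)).card
        = (Finset.univ.filter (fun j => j < i ∧ ρ j < σ i)).card := by
      congr 1
      apply Finset.filter_congr
      intro j _
      constructor
      · rintro ⟨hj, hlt⟩; exact ⟨hj, by rw [agree j hj]; exact hlt⟩
      · rintro ⟨hj, hlt⟩; exact ⟨hj, by rw [← agree j hj]; exact hlt⟩
    rw [hfσ, ← hE i] at hσ
    have cρ := count_split ρ i (ρ i)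
    have cσ := count_split ρ i (σ i)
    have Gρ : (Finset.univ.filter (fun w => w < ρ i ∧ ∀ j, j < i → ρ j ≠ w)).card
        = height312 ρ i := by omega
    have Gσ : (Finset.univ.filter (fun w => w < σ i ∧ ∀ j, j < i → ρ j ≠ w)).card
        = height312 ρ i := by omega
    have hρnot : ∀ j, j < i → ρ j ≠ ρ i :=
      fun j hj => fun e => absurd (ρ.injective e) (Fin.ne_of_lt hj)
    have hσnot : ∀ j, j < i → ρ j ≠ σ i := by
      intro j hj
      rw [agree j hj]
      exact fun e => absurd (σ.injective e) (Fin.ne_of_lt hj)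
    rcases lt_trichotomy (ρ i) (σ i) with h | h | h
    · have := Gmono (ρ i) (σ i) h hρnot
      omega
    · exact h
    · have := Gmono (σ i) (ρ i) h hσnot
      omega

/-- For `n ≥ 1`, the 312-height-vector map is a bijection from the set of
(3,1,2)-avoiding permutations of {1,…,n} onto the set `H_n` of sequences
`(h_1,…,h_n)` of nonnegative integers with `h_n = 0` and `h_i ≤ h_{i+1} + 1`. -/
theorem height312_bijOn_avoiding (n : ℕ) (hn : 1 ≤ n) :
    Set.BijOn (fun (ρ : Equiv.Perm (Fin n)) => fun i : Fin n => height312 ρ i)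
      {ρ | ∀ a b c : Fin n, a < b → b < c → ¬(ρ b < ρ c ∧ ρ c < ρ a)}
      {h : Fin n → ℕ | h ⟨n - 1, by omega⟩ = 0 ∧
        ∀ i : ℕ, ∀ hi : i + 1 < n, h ⟨i, by omega⟩ ≤ h ⟨i + 1, hi⟩ + 1} := by
  have hn0 : 0 < n := hn
  refine ⟨?_, ?_, ?_⟩
  · intro ρ hρ
    exact heights_of_avoid hn0 ρ hρ
  · intro ρ _ σ _ he
    exact code_injective ρ σ (fun i => congrFun he i)
  · rintro h ⟨h0, hstep⟩
    have B : ∀ i (hi : i < n), h ⟨i, hi⟩ + i + 1 ≤ n := by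
      have key : ∀ d : ℕ, ∀ i (hi : i < n), n - 1 - i ≤ d → h ⟨i, hi⟩ ≤ n - 1 - i := by
        intro d
        induction d with
        | zero =>
          intro i hi hd
          have : i = n - 1 := by omega
          subst this
          rw [h0]
          omega
        | succ d ih =>
          intro i hi hd
          by_cases hlast : i + 1 < n
          · have := hstep i hlast
            have h2 := ih (i + 1) hlast (by omega)
            calc h ⟨i, by omega⟩ ≤ h ⟨i + 1, hlast⟩ + 1 := hstep i hlast
              _ ≤ (n - 1 - (i + 1)) + 1 := by omega
              _ ≤ n - 1 - i := by omega
          · have : i = n - 1 := by omega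
            subst this
            rw [h0]
            omega
      intro i hi
      have := key (n - 1 - i) i hi le_rfl
      omega
    refine ⟨decPerm hn0 h B, ?_, ?_⟩
    · have hH : ∀ i : ℕ, ∀ hi : i + 1 < n,
          height312 (decPerm hn0 h B) ⟨i, by omega⟩
            ≤ height312 (decPerm hn0 h B) ⟨i + 1, hi⟩ + 1 := by
        intro i hi
        rw [height_decPerm hn0 h B, height_decPerm hn0 h B]
        exact hstep i hi
      exact avoid_of_heights (decPerm hn0 h B) hH
    · funext i
      exact height_decPerm hn0 h B i
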